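/- For n ≥ 0 let t_n := (2n)!/(4^n · (n!)² · (2n+1)). For every integer n ≥ 1 and every real w with 0 ≤ w ≤ 1, define a(n, w) := ∑_{k=0}^∞ (t_{n+k−1}/t_{n−1}) · w^k. Then 1 ≤ a(n, w) ≤ 1 + (π/2 − 1) · w / t_{n−1}. -/

import Mathlib

open Finset

noncomputable def arcsinCoeff (n : ℕ) : ℝ :=
  (Nat.factorial (2 * n) : ℝ) / (4 ^ n * (Nat.factorial n : ℝ) ^ 2 * (2 * n + 1))

noncomputable def arcsinTail (n : ℕ) (w : ℝ) : ℝ :=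
  ∑' k : ℕ, (arcsinCoeff (n + k - 1) / arcsinCoeff (n - 1)) * w ^ k

noncomputable def cb (n : ℕ) : ℝ :=
  (Nat.factorial (2 * n) : ℝ) / (4 ^ n * (Nat.factorial n : ℝ) ^ 2)

lemma cb_pos (n : ℕ) : 0 < cb n := by
  apply div_pos
  · exact_mod_cast Nat.factorial_pos _
  · positivity

lemma cb_zero : cb 0 = 1 := by simp [cb]

lemma cb_succ (n : ℕ) : cb (n + 1) = cb n * ((2 * n + 1) / (2 * n + 2)) := by
  have h1 : 2 * (n + 1) = 2 * n + 1 + 1 := by ring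
  rw [cb, cb, h1, Nat.factorial_succ, Nat.factorial_succ, Nat.factorial_succ]
  have h2 : (Nat.factorial n : ℝ) ≠ 0 := by exact_mod_cast (Nat.factorial_pos n).ne'
  have h4 : (4 : ℝ) ^ n ≠ 0 := by positivity
  field_simp
  push_cast
  ring

lemma cb_claim1 (n : ℕ) :
    ∑ k ∈ range (n + 1), (2 * (k : ℝ) + 1) * (cb k * cb (n - k))
      = (n + 1) * ∑ k ∈ range (n + 1), cb k * cb (n - k) := by
  have hrefl : ∑ k ∈ range (n + 1), (2 * (k : ℝ) + 1) * (cb k * cb (n - k))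
      = ∑ k ∈ range (n + 1), (2 * ((n : ℝ) - k) + 1) * (cb (n - k) * cb k) := by
    rw [← Finset.sum_range_reflect]
    apply Finset.sum_congr rfl
    intro j hj
    have hj' : j ≤ n := Nat.lt_succ_iff.mp (Finset.mem_range.mp hj)
    have h1 : n + 1 - 1 - j = n - j := by omega
    have h2 : n - (n - j) = j := Nat.sub_sub_self hj'
    rw [h1, h2]
    have : ((n - j : ℕ) : ℝ) = (n : ℝ) - j := by
      push_cast [Nat.cast_sub hj']; ring
    rw [this]
  have h2 : (2:ℝ) * ∑ k ∈ range (n + 1), (2 * (k : ℝ) + 1) * (cb k * cb (n - k))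
      = (2 * n + 2) * ∑ k ∈ range (n + 1), cb k * cb (n - k) := by
    rw [two_mul]
    nth_rewrite 2 [hrefl]
    rw [← Finset.sum_add_distrib, Finset.mul_sum]
    apply Finset.sum_congr rfl
    intro j hj
    ring
  linarith

lemma cb_conv (n : ℕ) : ∑ k ∈ range (n + 1), cb k * cb (n - k) = 1 := by
  induction n with
  | zero => simp [cb_zero]
  | succ n ih =>
    have key : ∑ k ∈ range (n + 2), (2 * (k : ℝ)) * (cb k * cb (n + 1 - k))
        = ∑ k ∈ range (n + 1), (2 * (k : ℝ) + 1) * (cb k * cb (n - k)) := by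
      rw [Finset.sum_range_succ' (fun k => (2 * (k : ℝ)) * (cb k * cb (n + 1 - k))) (n+1)]
      simp only [Nat.cast_zero, mul_zero, zero_mul, add_zero]
      apply Finset.sum_congr rfl
      intro i hi
      have h1 : n + 1 - (i + 1) = n - i := by omega
      rw [h1, cb_succ i]
      push_cast
      have h2 : (2 * (i:ℝ) + 2) ≠ 0 := by positivity
      field_simp
    have split : ∑ k ∈ range (n + 2), (2 * (k : ℝ) + 1) * (cb k * cb (n + 1 - k))
        = ∑ k ∈ range (n + 2), (2 * (k : ℝ)) * (cb k * cb (n + 1 - k))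
          + ∑ k ∈ range (n + 2), cb k * cb (n + 1 - k) := by
      rw [← Finset.sum_add_distrib]
      apply Finset.sum_congr rfl
      intro j hj; ring
    have c1 := cb_claim1 (n + 1)
    have c1' := cb_claim1 n
    rw [ih] at c1'
    push_cast at c1
    rw [split, key, c1'] at c1
    have hn1 : ((n:ℝ) + 1) ≠ 0 := by positivity
    have : ((n:ℝ) + 1) * ∑ k ∈ range (n + 2), cb k * cb (n + 1 - k) = ((n:ℝ)+1) * 1 := by
      push_cast at c1 ⊢
      linarith
    have := mul_left_cancel₀ hn1 this
    linarith

lemma cb_le_one (n : ℕ) : cb n ≤ 1 := by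
  induction n with
  | zero => simp [cb_zero]
  | succ n ih =>
    rw [cb_succ]
    have h1 : (2 * (n:ℝ) + 1) / (2 * n + 2) ≤ 1 := by
      rw [div_le_one (by positivity)]; linarith
    have := cb_pos n
    nlinarith

lemma cb_sq_le (n : ℕ) : cb n ^ 2 * (2 * n + 1) ≤ 1 := by
  induction n with
  | zero => simp [cb_zero]
  | succ n ih =>
    have h := cb_pos n
    have expand : cb (n+1) ^ 2 * (2 * ((n:ℝ)+1) + 1)
        = cb n ^ 2 * (2*(n:ℝ)+1) * ((2*(n:ℝ)+1)*(2*(n:ℝ)+3)/(2*(n:ℝ)+2)^2) := by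
      rw [cb_succ]
      have h2 : (2*(n:ℝ)+2) ≠ 0 := by positivity
      field_simp
      ring
    have hfrac : (2*(n:ℝ)+1)*(2*(n:ℝ)+3)/(2*(n:ℝ)+2)^2 ≤ 1 := by
      rw [div_le_one (by positivity)]
      nlinarith [sq_nonneg ((n:ℝ))]
    have hfrac0 : 0 ≤ (2*(n:ℝ)+1)*(2*(n:ℝ)+3)/(2*(n:ℝ)+2)^2 := by positivity
    have hnn : 0 ≤ cb n ^ 2 * (2*(n:ℝ)+1) := by positivity
    push_cast
    rw [expand]
    nlinarith

lemma summable_cb_mul_pow {y : ℝ} (h0 : 0 ≤ y) (h1 : y < 1) :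
    Summable (fun n : ℕ => cb n * y ^ n) := by
  refine Summable.of_nonneg_of_le (fun n => by have := (cb_pos n).le; positivity)
    (fun n => ?_) (summable_geometric_of_lt_one h0 h1)
  calc cb n * y ^ n ≤ 1 * y ^ n := by
        have : (0:ℝ) ≤ y ^ n := by positivity
        nlinarith [cb_le_one n, cb_pos n]
    _ = y ^ n := one_mul _

lemma tsum_cb {y : ℝ} (h0 : 0 ≤ y) (h1 : y < 1) :
    ∑' n, cb n * y ^ n = 1 / Real.sqrt (1 - y) := by
  have hs := summable_cb_mul_pow h0 h1
  have hnorm : Summable (fun n : ℕ => ‖cb n * y ^ n‖) := by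
    have : (fun n : ℕ => ‖cb n * y ^ n‖) = fun n : ℕ => cb n * y ^ n := by
      funext n
      rw [Real.norm_eq_abs, abs_of_nonneg]
      have := (cb_pos n).le
      positivity
    rw [this]; exact hs
  have hprod : (∑' n, cb n * y ^ n) * (∑' n, cb n * y ^ n) = (1 - y)⁻¹ := by
    rw [tsum_mul_tsum_eq_tsum_sum_range_of_summable_norm hnorm hnorm]
    have key : ∀ n : ℕ, ∑ k ∈ Finset.range (n+1), (cb k * y ^ k) * (cb (n-k) * y ^ (n-k))
        = y ^ n := by
      intro n
      have step : ∀ k ∈ Finset.range (n+1),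
          (cb k * y ^ k) * (cb (n-k) * y ^ (n-k)) = (cb k * cb (n-k)) * y ^ n := by
        intro k hk
        have hk' : k ≤ n := Nat.lt_succ_iff.mp (Finset.mem_range.mp hk)
        have : y ^ k * y ^ (n - k) = y ^ n := by
          rw [← pow_add]
          congr 1
          omega
        calc (cb k * y ^ k) * (cb (n-k) * y ^ (n-k))
            = (cb k * cb (n-k)) * (y ^ k * y ^ (n-k)) := by ring
          _ = (cb k * cb (n-k)) * y ^ n := by rw [this]
      rw [Finset.sum_congr rfl step, ← Finset.sum_mul, cb_conv, one_mul]
    rw [tsum_congr key, tsum_geometric_of_lt_one h0 h1]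
  have hF1 : (1:ℝ) ≤ ∑' n, cb n * y ^ n := by
    have := Summable.le_tsum hs 0 (fun i _ => by have := (cb_pos i).le; positivity)
    simpa [cb_zero] using this
  have h1y : (0:ℝ) < 1 - y := by linarith
  calc (∑' n, cb n * y ^ n)
      = Real.sqrt ((∑' n, cb n * y ^ n) * (∑' n, cb n * y ^ n)) :=
        (Real.sqrt_mul_self (by linarith)).symm
    _ = Real.sqrt ((1 - y)⁻¹) := by rw [hprod]
    _ = 1 / Real.sqrt (1 - y) := by rw [Real.sqrt_inv, one_div]

lemma t_eq (n : ℕ) : arcsinCoeff n = cb n / (2 * n + 1) := by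
  rw [arcsinCoeff, cb, div_div]

lemma t_pos (n : ℕ) : 0 < arcsinCoeff n := by
  rw [t_eq]
  exact div_pos (cb_pos n) (by positivity)

lemma t_zero : arcsinCoeff 0 = 1 := by
  simp [arcsinCoeff]

open MeasureTheory in
lemma arcsin_eq_tsum {x : ℝ} (h0 : 0 ≤ x) (h1 : x < 1) :
    Real.arcsin x = ∑' n : ℕ, arcsinCoeff n * x ^ (2 * n + 1) := by
  have hderiv : ∀ u ∈ Set.uIcc 0 x, HasDerivAt Real.arcsin (1 / Real.sqrt (1 - u ^ 2)) u := by
    intro u hu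
    rw [Set.uIcc_of_le h0] at hu
    exact Real.hasDerivAt_arcsin (ne_of_gt (by linarith [hu.1] : (-1:ℝ) < u))
      (ne_of_lt (lt_of_le_of_lt hu.2 h1))
  have hcont : ContinuousOn (fun u : ℝ => 1 / Real.sqrt (1 - u ^ 2)) (Set.uIcc 0 x) := by
    apply ContinuousOn.div continuousOn_const
    · exact ((continuous_const.sub (continuous_pow 2)).sqrt).continuousOn
    · intro u hu
      rw [Set.uIcc_of_le h0] at hu
      have hx2 : u ^ 2 < 1 := by nlinarith [hu.1, hu.2]
      exact (Real.sqrt_pos.mpr (by linarith)).ne'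
  have ftc := intervalIntegral.integral_eq_sub_of_hasDerivAt hderiv hcont.intervalIntegrable
  rw [Real.arcsin_zero, sub_zero, intervalIntegral.integral_of_le h0] at ftc
  have hval : ∀ n : ℕ, (∫ u in Set.Ioc 0 x, cb n * u ^ (2*n)) = arcsinCoeff n * x ^ (2*n+1) := by
    intro n
    rw [← intervalIntegral.integral_of_le h0, intervalIntegral.integral_const_mul, integral_pow,
      t_eq]
    have : ((2*n : ℕ) : ℝ) + 1 = 2 * (n:ℝ) + 1 := by push_cast; ring
    rw [this]
    have h2 : (2 * (n:ℝ) + 1) ≠ 0 := by positivity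
    field_simp
    rw [zero_pow (by omega), sub_zero]
  have hF_int : ∀ n : ℕ, IntegrableOn (fun u : ℝ => cb n * u ^ (2 * n)) (Set.Ioc 0 x) volume :=
    fun n => Continuous.integrableOn_Ioc (by continuity)
  have hnorm_eq : ∀ n : ℕ, (fun u : ℝ => ‖cb n * u ^ (2*n)‖) = fun u : ℝ => cb n * u ^ (2*n) := by
    intro n
    funext u
    rw [Real.norm_eq_abs, abs_of_nonneg]
    exact mul_nonneg (cb_pos n).le (Even.pow_nonneg (even_two_mul n) u)
  have hsum_norm : Summable (fun n : ℕ => ∫ u in Set.Ioc 0 x, ‖cb n * u ^ (2*n)‖) := by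
    have heq : (fun n : ℕ => ∫ u in Set.Ioc 0 x, ‖cb n * u ^ (2*n)‖)
        = fun n : ℕ => arcsinCoeff n * x ^ (2*n+1) := by
      funext n
      rw [hnorm_eq n, hval n]
    rw [heq]
    refine Summable.of_nonneg_of_le (fun n => by have := (t_pos n).le; positivity)
      (fun n => ?_) (summable_geometric_of_lt_one (show (0:ℝ) ≤ x^2 by positivity)
        (by nlinarith))
    have ht1 : arcsinCoeff n ≤ 1 := by
      rw [t_eq]
      have := cb_le_one n
      have := cb_pos n
      rw [div_le_one (by positivity)]
      linarith
    calc arcsinCoeff n * x ^ (2*n+1) ≤ 1 * x ^ (2*n+1) := by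
          have : (0:ℝ) ≤ x ^ (2*n+1) := by positivity
          nlinarith [(t_pos n).le]
      _ = (x^2)^n * x := by rw [one_mul, pow_add, pow_mul, pow_one]
      _ ≤ (x^2)^n * 1 := by
          have : (0:ℝ) ≤ (x^2)^n := by positivity
          nlinarith
      _ = (x^2)^n := mul_one _
  have swap := MeasureTheory.integral_tsum_of_summable_integral_norm hF_int hsum_norm
  have hpt : Set.EqOn (fun u : ℝ => ∑' n : ℕ, cb n * u ^ (2*n))
      (fun u : ℝ => 1 / Real.sqrt (1 - u ^ 2)) (Set.Ioc 0 x) := by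
    intro u hu
    have hu1 : 0 < u := hu.1
    have hu2 : u ≤ x := hu.2
    have hy1 : u ^ 2 < 1 := by nlinarith
    have := tsum_cb (y := u^2) (by positivity) hy1
    simp only
    rw [← this]
    apply tsum_congr
    intro n
    rw [pow_mul]
  calc Real.arcsin x = ∫ u in Set.Ioc 0 x, 1 / Real.sqrt (1 - u ^ 2) := ftc.symm
    _ = ∫ u in Set.Ioc 0 x, ∑' n : ℕ, cb n * u ^ (2*n) :=
        (setIntegral_congr_fun measurableSet_Ioc hpt).symm
    _ = ∑' n : ℕ, ∫ u in Set.Ioc 0 x, cb n * u ^ (2*n) := swap.symm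
    _ = ∑' n : ℕ, arcsinCoeff n * x ^ (2*n+1) := tsum_congr hval

lemma t_antitone : Antitone arcsinCoeff := by
  apply antitone_nat_of_succ_le
  intro n
  rw [t_eq, t_eq, cb_succ]
  have h := cb_pos n
  have h1 : (0:ℝ) < 2*(n:ℝ)+2 := by positivity
  have h3 : (0:ℝ) < 2*((n:ℝ)+1)+1 := by positivity
  push_cast
  calc cb n * ((2*(n:ℝ)+1)/(2*(n:ℝ)+2)) / (2*((n:ℝ)+1)+1)
      ≤ cb n * 1 / (2*((n:ℝ)+1)+1) := by
        gcongr
        rw [div_le_one (by positivity)]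
        linarith
    _ = cb n / (2*((n:ℝ)+1)+1) := by rw [mul_one]
    _ ≤ cb n / (2*(n:ℝ)+1) := by
        gcongr <;> first | positivity | linarith [h.le]

lemma summable_t : Summable arcsinCoeff := by
  have hbnd : ∀ n : ℕ, arcsinCoeff n ≤ 1 / (((n:ℝ)+1) * Real.sqrt ((n:ℝ)+1)) := by
    intro n
    have h2 : (0:ℝ) < 2*(n:ℝ)+1 := by positivity
    have hsqp : 0 < Real.sqrt (2*(n:ℝ)+1) := Real.sqrt_pos.mpr h2
    have hsq : Real.sqrt (2*(n:ℝ)+1) ^ 2 = 2*(n:ℝ)+1 := Real.sq_sqrt h2.le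
    have hcb : cb n * Real.sqrt (2*(n:ℝ)+1) ≤ 1 := by
      have hs := cb_sq_le n
      nlinarith [cb_pos n, mul_pos (cb_pos n) hsqp]
    have step1 : arcsinCoeff n ≤ 1 / ((2*(n:ℝ)+1) * Real.sqrt (2*(n:ℝ)+1)) := by
      rw [t_eq, div_le_div_iff₀ (by positivity) (by positivity)]
      nlinarith [cb_pos n]
    refine le_trans step1 ?_
    apply one_div_le_one_div_of_le (by positivity)
    have hle : (n:ℝ)+1 ≤ 2*(n:ℝ)+1 := by linarith [Nat.cast_nonneg (α := ℝ) n]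
    have := Real.sqrt_le_sqrt hle
    have h0 : (0:ℝ) ≤ (n:ℝ)+1 := by positivity
    nlinarith [Real.sqrt_nonneg ((n:ℝ)+1)]
  have hs32 : Summable (fun n : ℕ => 1 / ((n:ℝ)+1) ^ ((3:ℝ)/2)) := by
    have h1 := Real.summable_one_div_nat_rpow.mpr (by norm_num : (1:ℝ) < 3/2)
    have h2 := (summable_nat_add_iff 1).mpr h1
    simpa using h2
  have heq : (fun n : ℕ => 1 / ((n:ℝ)+1) ^ ((3:ℝ)/2))
      = fun n : ℕ => 1 / (((n:ℝ)+1) * Real.sqrt ((n:ℝ)+1)) := by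
    funext n
    rw [show ((3:ℝ)/2) = 1 + 1/2 by norm_num, Real.rpow_add (by positivity), Real.rpow_one,
      ← Real.sqrt_eq_rpow]
  rw [heq] at hs32
  exact hs32.of_nonneg_of_le (fun n => (t_pos n).le) hbnd

lemma summable_tx {x : ℝ} (h0 : 0 ≤ x) (h1 : x ≤ 1) :
    Summable (fun n : ℕ => arcsinCoeff n * x ^ (2*n+1)) := by
  refine summable_t.of_nonneg_of_le (fun n => by have := (t_pos n).le; positivity) (fun n => ?_)
  have hp : x ^ (2*n+1) ≤ 1 := pow_le_one₀ h0 h1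
  have := (t_pos n).le
  nlinarith [pow_nonneg h0 (2*n+1)]

open Filter Topology in
lemma tsum_t : ∑' n, arcsinCoeff n = Real.pi / 2 := by
  have h1mem : (1:ℝ) ∈ Set.Ioc (0:ℝ) 1 := by constructor <;> norm_num
  apply le_antisymm
  · apply Real.tsum_le_of_sum_range_le (fun n => (t_pos n).le)
    intro N
    have key : ∀ x ∈ Set.Ico (0:ℝ) 1,
        ∑ i ∈ Finset.range N, arcsinCoeff i * x ^ (2*i+1) ≤ Real.pi/2 := by
      intro x hx
      calc ∑ i ∈ Finset.range N, arcsinCoeff i * x ^ (2*i+1)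
          ≤ ∑' n, arcsinCoeff n * x ^ (2*n+1) :=
            Summable.sum_le_tsum _ (fun i _ => by have := (t_pos i).le; have := pow_nonneg hx.1 (2*i+1); positivity)
              (summable_tx hx.1 hx.2.le)
        _ = Real.arcsin x := (arcsin_eq_tsum hx.1 hx.2).symm
        _ ≤ Real.pi/2 := Real.arcsin_le_pi_div_two x
    have cont : Tendsto (fun x : ℝ => ∑ i ∈ Finset.range N, arcsinCoeff i * x ^ (2*i+1))
        (nhdsWithin (1:ℝ) (Set.Iio 1)) (nhds (∑ i ∈ Finset.range N, arcsinCoeff i)) := by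
      have hc : Continuous fun x : ℝ => ∑ i ∈ Finset.range N, arcsinCoeff i * x ^ (2*i+1) := by
        continuity
      have h1 := hc.tendsto 1
      simp only [one_pow, mul_one] at h1
      exact h1.mono_left nhdsWithin_le_nhds
    refine le_of_tendsto cont ?_
    filter_upwards [Ico_mem_nhdsLT_of_mem h1mem] with x hx using key x hx
  · have contA : Tendsto Real.arcsin (nhdsWithin (1:ℝ) (Set.Iio 1)) (nhds (Real.pi/2)) := by
      have := Real.continuous_arcsin.tendsto 1
      rw [Real.arcsin_one] at this
      exact this.mono_left nhdsWithin_le_nhds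
    refine le_of_tendsto contA ?_
    filter_upwards [Ico_mem_nhdsLT_of_mem h1mem] with x hx
    rw [arcsin_eq_tsum hx.1 hx.2]
    refine Summable.tsum_le_tsum (fun n => ?_) (summable_tx hx.1 hx.2.le) summable_t
    have hp : x ^ (2*n+1) ≤ 1 := pow_le_one₀ hx.1 hx.2.le
    have := (t_pos n).le
    nlinarith [pow_nonneg hx.1 (2*n+1)]

theorem arcsinTail_bounds (n : ℕ) (hn : 1 ≤ n) (w : ℝ) (hw0 : 0 ≤ w) (hw1 : w ≤ 1) :
    1 ≤ arcsinTail n w ∧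
      arcsinTail n w ≤ 1 + (Real.pi / 2 - 1) * w / arcsinCoeff (n - 1) := by
  obtain ⟨m, rfl⟩ : ∃ m, n = m + 1 := ⟨n - 1, by omega⟩
  have htm := t_pos m
  have tail_eq : arcsinTail (m+1) w
      = ∑' k : ℕ, (arcsinCoeff (m + k) / arcsinCoeff m) * w ^ k := by
    rw [arcsinTail]
    apply tsum_congr
    intro k
    have h1 : m + 1 + k - 1 = m + k := by omega
    have h2 : m + 1 - 1 = m := by omega
    rw [h1, h2]
  have f_nonneg : ∀ k : ℕ, 0 ≤ (arcsinCoeff (m + k) / arcsinCoeff m) * w ^ k := by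
    intro k
    have h1 := (t_pos (m+k)).le
    positivity
  have f_le : ∀ k : ℕ, (arcsinCoeff (m + k) / arcsinCoeff m) * w ^ k
      ≤ arcsinCoeff k / arcsinCoeff m := by
    intro k
    have h1 : arcsinCoeff (m + k) ≤ arcsinCoeff k := t_antitone (Nat.le_add_left k m)
    have h2 : w ^ k ≤ 1 := pow_le_one₀ hw0 hw1
    have h3 : (0:ℝ) ≤ arcsinCoeff (m+k) / arcsinCoeff m := by
      have := (t_pos (m+k)).le
      positivity
    calc (arcsinCoeff (m + k) / arcsinCoeff m) * w ^ k
        ≤ (arcsinCoeff (m + k) / arcsinCoeff m) * 1 := by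
          have := pow_nonneg hw0 k
          nlinarith
      _ = arcsinCoeff (m + k) / arcsinCoeff m := mul_one _
      _ ≤ arcsinCoeff k / arcsinCoeff m := by gcongr
  have hsum : Summable (fun k : ℕ => (arcsinCoeff (m + k) / arcsinCoeff m) * w ^ k) :=
    (summable_t.div_const (arcsinCoeff m)).of_nonneg_of_le f_nonneg f_le
  have h0term : (arcsinCoeff (m + 0) / arcsinCoeff m) * w ^ 0 = 1 := by
    simp [div_self htm.ne']
  constructor
  · rw [tail_eq]
    have := Summable.le_tsum hsum 0 (fun i _ => f_nonneg i)
    rw [h0term] at this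
    exact this
  · simp only [Nat.add_sub_cancel]
    rw [tail_eq, Summable.tsum_eq_zero_add hsum, h0term]
    have htail : Summable (fun k : ℕ => arcsinCoeff (k+1)) :=
      (summable_nat_add_iff 1).mpr summable_t
    have hterm : ∀ k : ℕ, (arcsinCoeff (m + (k+1)) / arcsinCoeff m) * w ^ (k+1)
        ≤ arcsinCoeff (k+1) * w / arcsinCoeff m := by
      intro k
      have h1 : arcsinCoeff (m + (k+1)) ≤ arcsinCoeff (k+1) := t_antitone (by omega)
      have h2 : w ^ (k+1) ≤ w := pow_le_of_le_one hw0 hw1 (by omega)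
      have h2' : (0:ℝ) ≤ w ^ (k+1) := pow_nonneg hw0 _
      have h3 : (0:ℝ) ≤ arcsinCoeff (k+1) / arcsinCoeff m := by
        have := (t_pos (k+1)).le
        positivity
      have h4 : arcsinCoeff (m + (k+1)) / arcsinCoeff m ≤ arcsinCoeff (k+1) / arcsinCoeff m := by
        gcongr
      calc (arcsinCoeff (m + (k+1)) / arcsinCoeff m) * w ^ (k+1)
          ≤ (arcsinCoeff (k+1) / arcsinCoeff m) * w := by
            apply mul_le_mul h4 h2 h2' h3
        _ = arcsinCoeff (k+1) * w / arcsinCoeff m := by ring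
    have hsum1 : Summable (fun k : ℕ => (arcsinCoeff (m + (k+1)) / arcsinCoeff m) * w ^ (k+1)) := by
      have := (summable_nat_add_iff 1).mpr hsum
      simpa using this
    have hsum2 : Summable (fun k : ℕ => arcsinCoeff (k+1) * w / arcsinCoeff m) :=
      (htail.mul_right w).div_const _
    have hle := Summable.tsum_le_tsum hterm hsum1 hsum2
    have hval2 : (∑' k : ℕ, arcsinCoeff (k+1) * w / arcsinCoeff m)
        = (Real.pi/2 - 1) * w / arcsinCoeff m := by
      have hts : (∑' k : ℕ, arcsinCoeff (k+1)) = Real.pi/2 - 1 := by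
        have h := Summable.tsum_eq_zero_add summable_t
        rw [tsum_t, t_zero] at h
        linarith
      have : (fun k : ℕ => arcsinCoeff (k+1) * w / arcsinCoeff m)
          = fun k : ℕ => arcsinCoeff (k+1) * (w / arcsinCoeff m) := by
        funext k; ring
      rw [this, tsum_mul_right, hts]
      ring
    rw [hval2] at hle
    linarith
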